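/- Let n and b be natural numbers with n ≥ 1 and b ≥ 2. Then the genus of T_b(n), i.e., the cardinality of ℕ \ T_b(n), equals ((b³ + b² − b − 1)·b^(2n) + ((n−1)·(b² − 1) − 2)·b^n − 2b + 4)/2. -/

import Mathlib

open Finset

/-- geometric sum 1 + b + ... + b^(i-1) -/
def gsum (b i : ℕ) : ℕ := ∑ j ∈ Finset.range i, b ^ j

/-- L(t) = ∑_{j≥1} ⌊t/b^j⌋ -/
def Lf (b t : ℕ) : ℕ := ∑ j ∈ Finset.range t, t / b ^ (j + 1)

lemma gsum_mul (b i : ℕ) (hb : 2 ≤ b) : (b - 1) * gsum b i + 1 = b ^ i := by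
  induction i with
  | zero => simp [gsum]
  | succ i ih =>
    rw [gsum, Finset.sum_range_succ, Nat.mul_add, pow_succ]
    rw [gsum] at ih
    have h1 : 1 ≤ b := by omega
    have h3 : (b - 1) * b ^ i = b * b ^ i - b ^ i := Nat.sub_one_mul b (b ^ i)
    have h4 : b ^ i ≤ b * b ^ i := Nat.le_mul_of_pos_left _ (by omega)
    have h2 : b * b ^ i = b ^ i * b := by ring
    omega

lemma Lf_eq (b : ℕ) (hb : 2 ≤ b) {t M : ℕ} (h : t < b ^ (M + 1)) :
    Lf b t = ∑ j ∈ Finset.range M, t / b ^ (j + 1) := by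
  have key : ∀ j, t ≤ j ∨ M ≤ j → t / b ^ (j + 1) = 0 := by
    intro j hj
    apply Nat.div_eq_of_lt
    rcases hj with hj | hj
    · calc t ≤ j := hj
        _ < 2 ^ (j+1) := (Nat.lt_two_pow_self (n := j)).trans (Nat.pow_lt_pow_succ one_lt_two)
        _ ≤ b ^ (j+1) := Nat.pow_le_pow_left hb _
    · exact h.trans_le (Nat.pow_le_pow_right (by omega) (by omega))
  have h1 : Lf b t = ∑ j ∈ Finset.range (max t M), t / b ^ (j + 1) := by
    rw [Lf]
    apply Finset.sum_subset
    · exact Finset.range_subset_range.2 (le_max_left _ _)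
    · intro j _ hj
      simp only [Finset.mem_range, not_lt] at hj
      exact key j (Or.inl hj)
  rw [h1]
  symm
  apply Finset.sum_subset
  · exact Finset.range_subset_range.2 (le_max_right _ _)
  · intro j _ hj
    simp only [Finset.mem_range, not_lt] at hj
    exact key j (Or.inr hj)

lemma lt_pow_self' (b t : ℕ) (hb : 2 ≤ b) : t < b ^ (t + 1) :=
  (Nat.lt_two_pow_self (n := t)).trans_le ((Nat.pow_le_pow_right two_pos t.le_succ).trans
    (Nat.pow_le_pow_left hb _))

lemma Lf_eq_of_le (b : ℕ) (hb : 2 ≤ b) {t M : ℕ} (h : t ≤ M) :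
    Lf b t = ∑ j ∈ Finset.range M, t / b ^ (j + 1) :=
  Lf_eq b hb ((lt_pow_self' b t hb).trans_le (Nat.pow_le_pow_right (by omega) (by omega)))

lemma Lf_mono (b : ℕ) (hb : 2 ≤ b) {t s : ℕ} (h : t ≤ s) : Lf b t ≤ Lf b s := by
  rw [Lf_eq_of_le b hb h, Lf_eq_of_le b hb (le_refl s)]
  exact Finset.sum_le_sum fun j _ => Nat.div_le_div_right h

lemma Lf_superadd (b : ℕ) (hb : 2 ≤ b) (x y : ℕ) : Lf b x + Lf b y ≤ Lf b (x + y) := by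
  rw [Lf_eq_of_le b hb (Nat.le_add_right x y), Lf_eq_of_le b hb (Nat.le_add_left y x),
    Lf_eq_of_le b hb (le_refl (x + y)), ← Finset.sum_add_distrib]
  apply Finset.sum_le_sum
  intro j _
  have hq : 0 < b ^ (j+1) := Nat.pow_pos (by omega)
  rw [Nat.le_div_iff_mul_le hq, Nat.add_mul]
  exact Nat.add_le_add (Nat.div_mul_le_self _ _) (Nat.div_mul_le_self _ _)

lemma Lf_pow (b : ℕ) (hb : 2 ≤ b) (i : ℕ) : gsum b i ≤ Lf b (b ^ i) := by
  have hi : i ≤ b ^ i := Nat.le_of_lt (Nat.lt_pow_self (n := i) (by omega : 1 < b))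
  rw [Lf_eq_of_le b hb (le_refl (b ^ i))]
  calc gsum b i = ∑ j ∈ Finset.range i, b ^ i / b ^ (j + 1) := by
        rw [gsum, ← Finset.sum_range_reflect]
        apply Finset.sum_congr rfl
        intro j hj
        simp only [Finset.mem_range] at hj
        rw [Nat.pow_div (by omega) (by omega)]
        congr 1
        omega
    _ ≤ _ := Finset.sum_le_sum_of_subset (Finset.range_subset_range.2 hi)

lemma Lf_zero (b : ℕ) : Lf b 0 = 0 := by simp [Lf]

/-- key step: L(c0 + b*t') = t' + L(t') when c0 < b -/
lemma Lf_step (b : ℕ) (hb : 2 ≤ b) (c0 t' : ℕ) (hc : c0 < b) :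
    Lf b (c0 + b * t') = t' + Lf b t' := by
  have hstab : Lf b (c0 + b * t') = ∑ j ∈ Finset.range (c0 + b * t' + 1), (c0 + b * t') / b ^ (j + 1) :=
    Lf_eq_of_le b hb (Nat.le_succ _)
  rw [hstab, Finset.sum_range_succ']
  have hterm : ∀ j, (c0 + b * t') / b ^ (j + 1) = t' / b ^ j := by
    intro j
    rw [pow_succ, mul_comm (b ^ j) b, ← Nat.div_div_eq_div_mul,
      Nat.add_mul_div_left _ _ (by omega : 0 < b), Nat.div_eq_of_lt hc, Nat.zero_add]
  have h0 : (c0 + b * t') / b ^ (0 + 1) = t' := by rw [hterm]; simp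
  rw [h0]
  have : ∑ j ∈ Finset.range (c0 + b * t'), (c0 + b * t') / b ^ (j + 1 + 1)
      = ∑ j ∈ Finset.range (c0 + b * t'), t' / b ^ (j + 1) := by
    apply Finset.sum_congr rfl
    intro j _
    rw [hterm (j+1)]
  rw [this, ← Lf_eq_of_le b hb (by nlinarith : t' ≤ c0 + b * t')]
  omega

/-- exact value of L on numbers given by digit representations -/
lemma digit_Lf (b : ℕ) (hb : 2 ≤ b) :
    ∀ (M : ℕ) (c : ℕ → ℕ), (∀ i < M, c i < b) →
      (b - 1) * Lf b (∑ i ∈ Finset.range M, c i * b ^ i) + ∑ i ∈ Finset.range M, c i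
        = ∑ i ∈ Finset.range M, c i * b ^ i := by
  intro M
  induction M with
  | zero => intro c _; simp [Lf_zero]
  | succ M ih =>
    intro c hc
    have hsplit : ∑ i ∈ Finset.range (M + 1), c i * b ^ i
        = c 0 + b * ∑ i ∈ Finset.range M, c (i + 1) * b ^ i := by
      rw [Finset.sum_range_succ', pow_zero, mul_one, Finset.mul_sum]
      have : ∑ k ∈ Finset.range M, c (k + 1) * b ^ (k + 1)
          = ∑ i ∈ Finset.range M, b * (c (i + 1) * b ^ i) := by
        apply Finset.sum_congr rfl
        intro i _
        ring
      omega
    have hs2 : ∑ i ∈ Finset.range (M + 1), c i = c 0 + ∑ i ∈ Finset.range M, c (i + 1) := by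
      rw [Finset.sum_range_succ']; omega
    have ihr : (b - 1) * Lf b (∑ i ∈ Finset.range M, c (i + 1) * b ^ i)
        + ∑ i ∈ Finset.range M, c (i + 1) = ∑ i ∈ Finset.range M, c (i + 1) * b ^ i :=
      ih (fun i => c (i + 1)) (fun i hi => hc (i + 1) (by omega))
    rw [hsplit, hs2, Lf_step b hb _ _ (hc 0 (by omega))]
    rw [Nat.mul_add]
    have h5 := Nat.sub_one_mul b (∑ i ∈ Finset.range M, c (i + 1) * b ^ i)
    have h6 : (∑ i ∈ Finset.range M, c (i + 1) * b ^ i)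
        ≤ b * ∑ i ∈ Finset.range M, c (i + 1) * b ^ i := Nat.le_mul_of_pos_left _ (by omega)
    omega

/-- existence of representations with prescribed "weight deficit" d -/
lemma exists_rep (b : ℕ) (hb : 2 ≤ b) :
    ∀ (d t : ℕ), d ≤ Lf b t →
      ∃ c : ℕ → ℕ, (∑ i ∈ Finset.range t, c i * b ^ i = t)
        ∧ (∑ i ∈ Finset.range t, c i) + (b - 1) * d = t := by
  intro d
  induction d with
  | zero =>
    intro t _
    rcases Nat.eq_zero_or_pos t with h0 | hpos
    · exact ⟨fun _ => 0, by simp [h0], by simp [h0]⟩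
    · refine ⟨fun i => if i = 0 then t else 0, ?_, ?_⟩
      · rw [Finset.sum_eq_single 0]
        · simp
        · intro i _ hi; simp [hi]
        · intro h; exact absurd (Finset.mem_range.2 hpos) h
      · rw [Finset.sum_eq_single 0]
        · simp
        · intro i _ hi; simp [hi]
        · intro h; exact absurd (Finset.mem_range.2 hpos) h
  | succ d ihd =>
    intro t hd
    obtain ⟨c, hct, hck⟩ := ihd t (by omega)
    -- find i0 < t with c i0 ≥ b
    by_cases hall : ∀ i < t, c i < b
    · exfalso
      have := digit_Lf b hb t c hall
      rw [hct] at this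
      have hLf : (b - 1) * Lf b t + (b - 1) * d = (b - 1) * Lf b t + ((b-1) * Lf b t) := by omega
      have : Lf b t = d := by
        have h1 : (b - 1) * Lf b t = (b - 1) * d := by omega
        exact (Nat.eq_of_mul_eq_mul_left (by omega) h1.symm).symm
      omega
    · push_neg at hall
      obtain ⟨i0, hi0t, hi0b⟩ := hall
      -- i0 + 1 < t
      have hpow : b ^ (i0 + 1) ≤ t := by
        calc b ^ (i0 + 1) = b * b ^ i0 := by ring
          _ ≤ c i0 * b ^ i0 := Nat.mul_le_mul_right _ hi0b
          _ ≤ ∑ i ∈ Finset.range t, c i * b ^ i :=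
              Finset.single_le_sum (f := fun i => c i * b ^ i) (fun i _ => Nat.zero_le _) (Finset.mem_range.2 hi0t)
          _ = t := hct
      have hi1t : i0 + 1 < t := by
        by_contra hcon
        push_neg at hcon
        have h7 : t < b ^ t := Nat.lt_pow_self (n := t) (by omega : 1 < b)
        have h8 : b ^ t ≤ b ^ (i0 + 1) := Nat.pow_le_pow_right (by omega) hcon
        omega
      set c' : ℕ → ℕ := fun i => if i = i0 then c i0 - b else if i = i0 + 1 then c (i0 + 1) + 1 else c i with hc'
      have hne : i0 ≠ i0 + 1 := by omega
      have hmem0 : i0 ∈ Finset.range t := Finset.mem_range.2 hi0t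
      have hmem1 : i0 + 1 ∈ (Finset.range t).erase i0 :=
        Finset.mem_erase.2 ⟨by omega, Finset.mem_range.2 hi1t⟩
      have key : ∀ w : ℕ → ℕ, ∑ i ∈ Finset.range t, c' i * w i + b * w i0
          = ∑ i ∈ Finset.range t, c i * w i + w (i0 + 1) := by
        intro w
        have peel : ∀ f : ℕ → ℕ, ∑ i ∈ Finset.range t, f i
            = f i0 + (f (i0 + 1) + ∑ i ∈ ((Finset.range t).erase i0).erase (i0 + 1), f i) := by
          intro f
          rw [Finset.add_sum_erase _ f hmem1, Finset.add_sum_erase _ f hmem0]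
        rw [peel (fun i => c' i * w i), peel (fun i => c i * w i)]
        have hrest : ∑ i ∈ ((Finset.range t).erase i0).erase (i0 + 1), c' i * w i
            = ∑ i ∈ ((Finset.range t).erase i0).erase (i0 + 1), c i * w i := by
          apply Finset.sum_congr rfl
          intro i hi
          have h1 : i ≠ i0 + 1 := (Finset.mem_erase.1 hi).1
          have h2 : i ≠ i0 := (Finset.mem_erase.1 (Finset.mem_erase.1 hi).2).1
          simp [hc', h1, h2]
        have hv0 : c' i0 = c i0 - b := by simp [hc']
        have hv1 : c' (i0 + 1) = c (i0 + 1) + 1 := by simp [hc', hne.symm]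
        have haux : (c i0 - b) * w i0 + b * w i0 = c i0 * w i0 := by
          rw [← Nat.add_mul, Nat.sub_add_cancel hi0b]
        have haux2 : (c (i0 + 1) + 1) * w (i0 + 1) = c (i0 + 1) * w (i0 + 1) + w (i0 + 1) := by
          ring
        rw [hrest, hv0, hv1, haux2]
        omega
      have k1 := key (fun i => b ^ i)
      have k2 := key (fun _ => 1)
      simp only [mul_one] at k2
      have hbp : b * b ^ i0 = b ^ (i0 + 1) := by rw [pow_succ]; ring
      refine ⟨c', ?_, ?_⟩
      · omega
      · have hmul : (b - 1) * (d + 1) = (b - 1) * d + (b - 1) := Nat.mul_succ _ _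
        omega

/-- The Thabit numerical semigroup base `b`: the additive submonoid of ℕ generated by
`{(b+1)·b^(n+i) − 1 : i ∈ ℕ}`. -/
def thabitSemigroup (b n : ℕ) : AddSubmonoid ℕ :=
  AddSubmonoid.closure {m : ℕ | ∃ i : ℕ, m = (b + 1) * b ^ (n + i) - 1}

theorem mem_iff (b n : ℕ) (hb : 2 ≤ b) (m : ℕ) :
    m ∈ thabitSemigroup b n
      ↔ ∃ t d : ℕ, d ≤ Lf b t ∧ m = ((b + 1) * b ^ n - 1) * t + (b - 1) * d := by
  have hA1 : 1 ≤ (b + 1) * b ^ n := Nat.mul_pos (by omega) (Nat.pow_pos (by omega))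
  constructor
  · intro hm
    induction hm using AddSubmonoid.closure_induction with
    | mem x hx =>
      obtain ⟨i, rfl⟩ := hx
      refine ⟨b ^ i, gsum b i, Lf_pow b hb i, ?_⟩
      have h1 : ((b + 1) * b ^ n - 1) * b ^ i = (b + 1) * b ^ n * b ^ i - b ^ i :=
        Nat.sub_one_mul _ _
      have h2 : b ^ i ≤ (b + 1) * b ^ n * b ^ i := Nat.le_mul_of_pos_left _ hA1
      have h3 : (b + 1) * b ^ n * b ^ i = (b + 1) * b ^ (n + i) := by
        rw [pow_add]; ring
      have h4 := gsum_mul b i hb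
      omega
    | zero => exact ⟨0, 0, by simp [Lf_zero], by simp⟩
    | add x y hx hy ihx ihy =>
      obtain ⟨t1, d1, hd1, rfl⟩ := ihx
      obtain ⟨t2, d2, hd2, rfl⟩ := ihy
      refine ⟨t1 + t2, d1 + d2, le_trans (Nat.add_le_add hd1 hd2) (Lf_superadd b hb t1 t2), ?_⟩
      ring
  · rintro ⟨t, d, hd, rfl⟩
    obtain ⟨c, hct, hck⟩ := exists_rep b hb d t hd
    have hmem : ∑ i ∈ Finset.range t, c i * ((b + 1) * b ^ (n + i) - 1)
        ∈ thabitSemigroup b n := by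
      apply AddSubmonoid.sum_mem (thabitSemigroup b n)
      intro i _
      have : c i * ((b + 1) * b ^ (n + i) - 1) = c i • ((b + 1) * b ^ (n + i) - 1) :=
        (nsmul_eq_mul (α := ℕ) _ _).symm
      rw [this]
      have hg : (b + 1) * b ^ (n + i) - 1
          ∈ {m : ℕ | ∃ j : ℕ, m = (b + 1) * b ^ (n + j) - 1} := ⟨i, rfl⟩
      exact (thabitSemigroup b n).nsmul_mem (AddSubmonoid.subset_closure hg) _
    have heq : ∑ i ∈ Finset.range t, c i * ((b + 1) * b ^ (n + i) - 1)
        = ((b + 1) * b ^ n - 1) * t + (b - 1) * d := by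
      have hsum : ∑ i ∈ Finset.range t, c i * ((b + 1) * b ^ (n + i) - 1)
          + ∑ i ∈ Finset.range t, c i
          = (b + 1) * b ^ n * t := by
        rw [← Finset.sum_add_distrib]
        have : ∀ i ∈ Finset.range t, c i * ((b + 1) * b ^ (n + i) - 1) + c i
            = (b + 1) * b ^ n * (c i * b ^ i) := by
          intro i _
          have hg1 : 1 ≤ (b + 1) * b ^ (n + i) := Nat.mul_pos (by omega) (Nat.pow_pos (by omega))
          rw [← Nat.mul_succ, Nat.succ_eq_add_one, Nat.sub_add_cancel hg1, pow_add]
          ring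
        rw [Finset.sum_congr rfl this, ← Finset.mul_sum, hct]
      have h1 : ((b + 1) * b ^ n - 1) * t = (b + 1) * b ^ n * t - t := Nat.sub_one_mul _ _
      have h2 : t ≤ (b + 1) * b ^ n * t := Nat.le_mul_of_pos_left _ hA1
      omega
    rw [← heq]
    exact hmem

lemma sumdiv1 (Q : ℕ) (hQ : 0 < Q) (a : ℕ) :
    2 * (∑ t ∈ Finset.range (Q * a), t / Q) + Q * a = Q * a * a := by
  induction a with
  | zero => simp
  | succ a ih =>
    have hsplit : Q * (a + 1) = Q * a + Q := by ring
    rw [hsplit, Finset.sum_range_add]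
    have hterm : ∀ i ∈ Finset.range Q, (Q * a + i) / Q = a := by
      intro i hi
      simp only [Finset.mem_range] at hi
      rw [Nat.add_comm, Nat.mul_comm Q a, Nat.add_mul_div_right _ _ hQ, Nat.div_eq_of_lt hi,
        Nat.zero_add]
    rw [Finset.sum_congr rfl hterm, Finset.sum_const, Finset.card_range, smul_eq_mul]
    have hr : (Q * a + Q) * (a + 1) = Q * a * a + 2 * (Q * a) + Q := by ring
    omega

set_option maxHeartbeats 1600000 in
theorem thabit_genus (n b : ℕ) (hn : 1 ≤ n) (hb : 2 ≤ b) :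
    2 * (Set.ncard {m : ℕ | m ∉ thabitSemigroup b n} : ℤ)
      = ((b : ℤ) ^ 3 + (b : ℤ) ^ 2 - (b : ℤ) - 1) * (b : ℤ) ^ (2 * n)
        + (((n : ℤ) - 1) * ((b : ℤ) ^ 2 - 1) - 2) * (b : ℤ) ^ n - 2 * (b : ℤ) + 4 := by
  classical
  have hbn1 : 1 ≤ b ^ n := Nat.pow_pos (by omega)
  have hbn : 2 ≤ (b + 1) * b ^ n := by nlinarith
  set a := (b + 1) * b ^ n - 1 with ha_def
  set N := (b + 1) * b ^ n - 2 with hN_def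
  set T := (b + 1) * ((b - 1) * b ^ n) with hT_def
  have haN : a = N + 1 := by omega
  have ha_pos : 0 < a := by omega
  have hb1 : 0 < b - 1 := by omega
  -- divisibility : (b-1) ∣ N
  have hdvd : (b - 1) ∣ N := by
    have h1 : 1 ≡ b [MOD b - 1] := (Nat.modEq_iff_dvd' (by omega)).2 dvd_rfl
    have h2 : 1 ≡ b ^ n [MOD b - 1] := by
      have := h1.pow n
      simpa using this
    have h3 : (b + 1) * 1 ≡ (b + 1) * b ^ n [MOD b - 1] := (Nat.ModEq.refl (b + 1)).mul h2
    have h4 : 2 ≡ b + 1 [MOD b - 1] := (Nat.modEq_iff_dvd' (by omega)).2 ⟨1, by omega⟩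
    have h5 : 2 ≡ (b + 1) * b ^ n [MOD b - 1] := h4.trans (by simpa using h3)
    have := (Nat.modEq_iff_dvd' hbn).1 h5
    simpa [hN_def] using this
  obtain ⟨q, hq⟩ := hdvd
  have ha : a = (b - 1) * q + 1 := by omega
  -- Lf at T
  have hTlt : T < b ^ (n + 1 + 1) := by
    obtain ⟨r, rfl⟩ : ∃ r, b = r + 2 := ⟨b - 2, by omega⟩
    have h1 : (r + 2 + 1) * (r + 2 - 1) < (r + 2) * (r + 2) := by
      simp only [show r + 2 - 1 = r + 1 from rfl]
      nlinarith
    calc T = (r + 2 + 1) * (r + 2 - 1) * (r + 2) ^ n := by rw [hT_def]; ring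
      _ < (r + 2) * (r + 2) * (r + 2) ^ n := by
          exact Nat.mul_lt_mul_of_lt_of_le h1 (le_refl _) (by positivity)
      _ = (r + 2) ^ (n + 1 + 1) := by ring
  have hLT : Lf b T = N := by
    rw [Lf_eq b hb hTlt, Finset.sum_range_succ]
    have hterm : ∀ j ∈ Finset.range n, T / b ^ (j + 1) = (b + 1) * ((b - 1) * b ^ (n - 1 - j)) := by
      intro j hj
      simp only [Finset.mem_range] at hj
      have hexp : n - 1 - j + (j + 1) = n := by omega
      have hpow : b ^ (n - 1 - j) * b ^ (j + 1) = b ^ n := by rw [← pow_add, hexp]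
      have hfac : T = (b + 1) * ((b - 1) * b ^ (n - 1 - j)) * b ^ (j + 1) := by
        rw [hT_def, ← hpow]; ring
      rw [hfac, Nat.mul_div_cancel _ (by positivity)]
    have hlast : T / b ^ (n + 1) = b - 1 := by
      have hsplitT : T = (b - 1) * b ^ n + b ^ (n + 1) * (b - 1) := by
        rw [hT_def, pow_succ]; ring
      rw [hsplitT, Nat.add_mul_div_left _ _ (by positivity : 0 < b ^ (n+1)),
        Nat.div_eq_of_lt (by
          calc (b - 1) * b ^ n < b * b ^ n := by
                exact Nat.mul_lt_mul_of_lt_of_le (by omega) (le_refl _) (by positivity)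
            _ = b ^ (n + 1) := by ring), Nat.zero_add]
    rw [Finset.sum_congr rfl hterm, hlast]
    have hrefl : ∑ j ∈ Finset.range n, (b + 1) * ((b - 1) * b ^ (n - 1 - j))
        = (b + 1) * ((b - 1) * gsum b n) := by
      rw [Finset.sum_range_reflect (fun i => (b + 1) * ((b - 1) * b ^ i)) n,
        gsum, Finset.mul_sum, Finset.mul_sum]
    rw [hrefl]
    have hg := gsum_mul b n hb
    have e1 : (b + 1) * ((b - 1) * gsum b n + 1) = (b + 1) * ((b - 1) * gsum b n) + (b + 1) := by
      ring
    have e2 : (b + 1) * ((b - 1) * gsum b n + 1) = (b + 1) * b ^ n := by rw [hg]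
    omega
  -- membership characterization with the abbreviation a
  have hmem : ∀ m : ℕ, m ∈ thabitSemigroup b n
      ↔ ∃ t d : ℕ, d ≤ Lf b t ∧ m = a * t + (b - 1) * d := fun m => by
    rw [ha_def]; exact mem_iff b n hb m
  clear_value a N T
  -- residue helper
  have hres : ∀ t e : ℕ, a * t + (b - 1) * e = t + (b - 1) * (q * t + e) := by
    intro t e; rw [ha]; ring
  have keyR : ∀ t e : ℕ, (a * t + (b - 1) * e) % (b - 1) = t % (b - 1) := by
    intro t e; rw [hres]; exact Nat.add_mul_mod_self_left t (b-1) (q*t+e)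
  -- impossibility of equal values with larger t on one side
  have keyA : ∀ t e t' x : ℕ, e ≤ N → t < t' →
      a * t + (b - 1) * e = a * t' + (b - 1) * x → False := by
    intro t e t' x he htt heq
    have hr : t % (b - 1) = t' % (b - 1) := by
      have h0 := keyR t e
      rw [heq, keyR t' x] at h0
      exact h0.symm
    have hdvd' : (b - 1) ∣ t' - t := (Nat.modEq_iff_dvd' htt.le).1 hr
    obtain ⟨k, hk⟩ := hdvd'
    rcases Nat.eq_zero_or_pos k with hk0 | hk1
    · rw [hk0, Nat.mul_zero] at hk; omega
    · have ht'e : t' = t + (b - 1) * k := by omega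
      have e3 : a * t' = a * t + a * ((b - 1) * k) := by rw [ht'e]; ring
      have e4 : a * ((b - 1) * 1) ≤ a * ((b - 1) * k) :=
        Nat.mul_le_mul_left a (Nat.mul_le_mul_left (b - 1) hk1)
      have e5 : (b - 1) * e < (b - 1) * a :=
        mul_lt_mul_of_pos_left (by omega : e < a) hb1
      have e6 : a * t + (b - 1) * a ≤ a * t' := by
        rw [e3]
        apply Nat.add_le_add_left
        calc (b - 1) * a = a * ((b - 1) * 1) := by ring
          _ ≤ a * ((b - 1) * k) := e4
      linarith [heq, e5, e6, Nat.zero_le ((b - 1) * x)]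
  -- the two Finsets
  set F1 : Finset ℕ := (Finset.range T).biUnion
    (fun t => (Finset.Ioc (Lf b t) N).image (fun e => a * t + (b - 1) * e)) with hF1
  set F2 : Finset ℕ := (Finset.range (b - 1)).biUnion
    (fun c => (Finset.range (q * c)).image (fun j => c + (b - 1) * j)) with hF2
  -- description of members of F1 / F2
  have hF1mem : ∀ m : ℕ, m ∈ F1 ↔ ∃ t e : ℕ, t < T ∧ Lf b t < e ∧ e ≤ N
      ∧ m = a * t + (b - 1) * e := by
    intro m
    rw [hF1]
    simp only [Finset.mem_biUnion, Finset.mem_image, Finset.mem_range, Finset.mem_Ioc]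
    constructor
    · rintro ⟨t, ht, e, ⟨h1, h2⟩, h3⟩
      exact ⟨t, e, ht, h1, h2, h3.symm⟩
    · rintro ⟨t, e, ht, h1, h2, h3⟩
      exact ⟨t, ht, e, ⟨h1, h2⟩, h3.symm⟩
  have hF2mem : ∀ m : ℕ, m ∈ F2 ↔ ∃ c j : ℕ, c < b - 1 ∧ j < q * c
      ∧ m = c + (b - 1) * j := by
    intro m
    rw [hF2]
    simp only [Finset.mem_biUnion, Finset.mem_image, Finset.mem_range]
    constructor
    · rintro ⟨c, hc, j, hj, h3⟩
      exact ⟨c, j, hc, hj, h3.symm⟩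
    · rintro ⟨c, j, hc, hj, h3⟩
      exact ⟨c, hc, j, hj, h3.symm⟩
  -- F2 members have small residues
  have hF2small : ∀ m : ℕ, m ∈ F2 → m < a * (m % (b - 1)) := by
    intro m hm
    obtain ⟨c, j, hc, hj, rfl⟩ := (hF2mem m).1 hm
    have hcm : (c + (b - 1) * j) % (b - 1) = c := by
      rw [Nat.add_mul_mod_self_left, Nat.mod_eq_of_lt hc]
    rw [hcm]
    have e1 : a * c = c + (b - 1) * (q * c) := by rw [ha]; ring
    have e2 : (b - 1) * j < (b - 1) * (q * c) := mul_lt_mul_of_pos_left hj hb1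
    linarith [e1, e2, Nat.zero_le ((b - 1) * j)]
  have hF1big : ∀ m : ℕ, m ∈ F1 → a * (m % (b - 1)) ≤ m := by
    intro m hm
    obtain ⟨t, e, ht, h1, h2, rfl⟩ := (hF1mem m).1 hm
    rw [keyR t e]
    have e1 : a * (t % (b - 1)) ≤ a * t := Nat.mul_le_mul_left a (Nat.mod_le t _)
    linarith [e1, Nat.zero_le ((b - 1) * e)]
  -- main set equality
  have hset : {m : ℕ | m ∉ thabitSemigroup b n} = ↑(F1 ∪ F2) := by
    ext m
    simp only [Set.mem_setOf_eq, Finset.coe_union, Set.mem_union, Finset.mem_coe]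
    constructor
    · intro hmS
      by_cases hsmall : m < a * (m % (b - 1))
      · right
        rw [hF2mem]
        refine ⟨m % (b - 1), m / (b - 1), Nat.mod_lt _ hb1, ?_, ?_⟩
        · -- j < q * c
          have e1 : a * (m % (b - 1)) = m % (b - 1) + (b - 1) * (q * (m % (b - 1))) := by
            rw [ha]; ring
          have e2 : (b - 1) * (m / (b - 1)) + m % (b - 1) = m := Nat.div_add_mod m (b - 1)
          have e3 : (b - 1) * (m / (b - 1)) < (b - 1) * (q * (m % (b - 1))) := by
            linarith [e1, e2, hsmall]
          exact Nat.lt_of_mul_lt_mul_left e3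
        · have := Nat.div_add_mod m (b - 1)
          omega
      · left
        -- construct t, e
        push_neg at hsmall
        set c := m % (b - 1) with hc_def
        set j0 := m / (b - 1) with hj0_def
        have hm0 : (b - 1) * j0 + c = m := Nat.div_add_mod m (b - 1)
        have hac : a * c = c + (b - 1) * (q * c) := by rw [ha]; ring
        have hj0qc : q * c ≤ j0 := by
          have e3 : (b - 1) * (q * c) ≤ (b - 1) * j0 := by
            linarith [hm0, hac, hsmall]
          exact Nat.le_of_mul_le_mul_left e3 hb1
        obtain ⟨v, hv⟩ : ∃ v, j0 = q * c + v := ⟨j0 - q * c, by omega⟩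
        set s := v / a with hs_def
        set e := v % a with he_def
        have hse : a * s + e = v := Nat.div_add_mod v a
        have he : e < a := Nat.mod_lt _ ha_pos
        set t := c + (b - 1) * s with ht_def2
        have hmeq : m = a * t + (b - 1) * e := by
          have expand : a * t + (b - 1) * e
              = c + (b - 1) * (q * c + (a * s + e)) := by rw [ht_def2, ha]; ring
          rw [expand, hse, ← hv]
          omega
        have he2 : Lf b t < e := by
          by_contra hcon
          push_neg at hcon
          exact hmS ((hmem m).2 ⟨t, e, hcon, hmeq⟩)
        have ht : t < T := by
          by_contra hcon
          push_neg at hcon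
          have := Lf_mono b hb hcon
          omega
        rw [hF1mem]
        exact ⟨t, e, ht, he2, by omega, hmeq⟩
    · intro hmF hmS
      obtain ⟨t', d, hd, hmeq'⟩ := (hmem m).1 hmS
      rcases hmF with hm1 | hm2
      · obtain ⟨t, e, ht, h1, h2, hmeq⟩ := (hF1mem m).1 hm1
        have heq : a * t + (b - 1) * e = a * t' + (b - 1) * d := by omega
        rcases lt_trichotomy t t' with h | h | h
        · exact keyA t e t' d h2 h heq
        · subst h
          have : (b - 1) * e = (b - 1) * d := by
            have e1 : a * t ≤ a * t := le_refl _
            omega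
          have hed : e = d := Nat.eq_of_mul_eq_mul_left hb1 this
          have := Lf_mono b hb (le_refl t)
          omega
        · -- t' < t : d ≥ e but d ≤ Lf t' ≤ Lf t < e
          have hLf : Lf b t' ≤ Lf b t := Lf_mono b hb h.le
          have e1 : a * t' ≤ a * t := Nat.mul_le_mul_left a h.le
          have e2 : (b - 1) * e ≤ (b - 1) * d := by omega
          have hed : e ≤ d := Nat.le_of_mul_le_mul_left e2 hb1
          omega
      · obtain ⟨c, j, hc, hj, hmeq⟩ := (hF2mem m).1 hm2
        -- m < a * c but m ≥ a * (t') with t' % (b-1) = c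
        have hcm : m % (b - 1) = c := by
          rw [hmeq, Nat.add_mul_mod_self_left, Nat.mod_eq_of_lt hc]
        have ht'm : t' % (b - 1) = c := by rw [← hcm, hmeq', keyR]
        have hct' : c ≤ t' := ht'm ▸ Nat.mod_le t' (b - 1)
        have e1 : a * c ≤ a * t' := Nat.mul_le_mul_left a hct'
        have e2 : a * c = c + (b - 1) * (q * c) := by rw [ha]; ring
        have e3 : (b - 1) * j < (b - 1) * (q * c) := mul_lt_mul_of_pos_left hj hb1
        linarith [hmeq, hmeq', e1, e2, e3, Nat.zero_le ((b - 1) * d)]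
  -- disjointness of F1 and F2
  have hdisj : Disjoint F1 F2 := by
    rw [Finset.disjoint_left]
    intro m hm1 hm2
    have h1 := hF1big m hm1
    have h2 := hF2small m hm2
    omega
  -- cardinality of F1
  have hpair1 : ∀ x ∈ Finset.range T, ∀ y ∈ Finset.range T, x ≠ y →
      Disjoint ((Finset.Ioc (Lf b x) N).image (fun e => a * x + (b - 1) * e))
        ((Finset.Ioc (Lf b y) N).image (fun e => a * y + (b - 1) * e)) := by
    intro x hx y hy hxy
    rw [Finset.disjoint_left]
    intro m hmx hmy
    obtain ⟨e1, he1, hm1⟩ := Finset.mem_image.1 hmx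
    obtain ⟨e2, he2, hm2⟩ := Finset.mem_image.1 hmy
    rw [Finset.mem_Ioc] at he1 he2
    have heq : a * x + (b - 1) * e1 = a * y + (b - 1) * e2 := by rw [hm1, hm2]
    rcases lt_trichotomy x y with h | h | h
    · exact keyA x e1 y e2 he1.2 h heq
    · exact hxy h
    · exact keyA y e2 x e1 he2.2 h heq.symm
  have hc1 : F1.card = ∑ t ∈ Finset.range T, (N - Lf b t) := by
    rw [hF1, Finset.card_biUnion hpair1]
    refine Finset.sum_congr rfl fun t ht => ?_
    rw [Finset.card_image_of_injOn, Nat.card_Ioc]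
    intro e1 _ e2 _ hee
    have hee' : a * t + (b - 1) * e1 = a * t + (b - 1) * e2 := hee
    have : (b - 1) * e1 = (b - 1) * e2 := by omega
    exact Nat.eq_of_mul_eq_mul_left hb1 this
  -- cardinality of F2
  have hpair2 : ∀ x ∈ Finset.range (b - 1), ∀ y ∈ Finset.range (b - 1), x ≠ y →
      Disjoint ((Finset.range (q * x)).image (fun j => x + (b - 1) * j))
        ((Finset.range (q * y)).image (fun j => y + (b - 1) * j)) := by
    intro x hx y hy hxy
    rw [Finset.disjoint_left]
    intro m hmx hmy
    obtain ⟨j1, _, hm1⟩ := Finset.mem_image.1 hmx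
    obtain ⟨j2, _, hm2⟩ := Finset.mem_image.1 hmy
    simp only [Finset.mem_range] at hx hy
    apply hxy
    have e1 : m % (b - 1) = x := by
      rw [← hm1, Nat.add_mul_mod_self_left, Nat.mod_eq_of_lt hx]
    have e2 : m % (b - 1) = y := by
      rw [← hm2, Nat.add_mul_mod_self_left, Nat.mod_eq_of_lt hy]
    omega
  have hc2 : F2.card = ∑ c ∈ Finset.range (b - 1), q * c := by
    rw [hF2, Finset.card_biUnion hpair2]
    refine Finset.sum_congr rfl fun c hc => ?_
    rw [Finset.card_image_of_injOn, Finset.card_range]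
    intro j1 _ j2 _ hjj
    have hjj' : c + (b - 1) * j1 = c + (b - 1) * j2 := hjj
    have : (b - 1) * j1 = (b - 1) * j2 := by omega
    exact Nat.eq_of_mul_eq_mul_left hb1 this
  -- Gauss sum for F2
  have hgauss : 2 * F2.card = q * ((b - 1) * (b - 1 - 1)) := by
    rw [hc2, ← Finset.mul_sum, ← Finset.sum_range_id_mul_two (b - 1)]
    ring
  -- swap sums
  have hswap : ∑ t ∈ Finset.range T, Lf b t
      = ∑ j ∈ Finset.range (n + 1), ∑ t ∈ Finset.range T, t / b ^ (j + 1) := by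
    rw [Finset.sum_congr rfl (fun t ht => Lf_eq b hb
      (lt_trans (Finset.mem_range.1 ht) hTlt))]
    exact Finset.sum_comm
  -- per-j evaluation, j < n
  have hperj : ∀ j ∈ Finset.range n, 2 * (∑ t ∈ Finset.range T, t / b ^ (j + 1)) + T
      = T * ((b + 1) * ((b - 1) * b ^ (n - 1 - j))) := by
    intro j hj
    simp only [Finset.mem_range] at hj
    have hexp : n - 1 - j + (j + 1) = n := by omega
    have hpow : b ^ (n - 1 - j) * b ^ (j + 1) = b ^ n := by rw [← pow_add, hexp]
    have hfac : T = b ^ (j + 1) * ((b + 1) * ((b - 1) * b ^ (n - 1 - j))) := by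
      rw [hT_def, ← hpow]; ring
    have := sumdiv1 (b ^ (j + 1)) (by positivity) ((b + 1) * ((b - 1) * b ^ (n - 1 - j)))
    rw [← hfac] at this
    rw [this]
  -- j = n evaluation
  have hlastj : 2 * (∑ t ∈ Finset.range T, t / b ^ (n + 1)) + T
      = b ^ (n + 1) * ((b - 1) * (b - 1)) + 2 * ((b - 1) * b ^ n * (b - 1)) + (b - 1) * b ^ n := by
    have hsplitT2 : T = b ^ (n + 1) * (b - 1) + (b - 1) * b ^ n := by
      rw [hT_def, pow_succ]; ring
    rw [hsplitT2, Finset.sum_range_add]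
    have hS1 := sumdiv1 (b ^ (n + 1)) (by positivity) (b - 1)
    have hS2 : ∑ i ∈ Finset.range ((b - 1) * b ^ n), (b ^ (n + 1) * (b - 1) + i) / b ^ (n + 1)
        = (b - 1) * b ^ n * (b - 1) := by
      have hterm : ∀ i ∈ Finset.range ((b - 1) * b ^ n),
          (b ^ (n + 1) * (b - 1) + i) / b ^ (n + 1) = b - 1 := by
        intro i hi
        simp only [Finset.mem_range] at hi
        rw [Nat.mul_add_div (by positivity), Nat.div_eq_of_lt, Nat.add_zero]
        calc i < (b - 1) * b ^ n := hi
          _ < b * b ^ n := by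
              exact Nat.mul_lt_mul_of_lt_of_le (by omega) (le_refl _) (by positivity)
          _ = b ^ (n + 1) := by ring
      rw [Finset.sum_congr rfl hterm, Finset.sum_const, Finset.card_range, smul_eq_mul]
    rw [hS2]
    have ha1 : b ^ (n + 1) * (b - 1) * (b - 1) = b ^ (n + 1) * ((b - 1) * (b - 1)) := by ring
    linarith [hS1, ha1]
  -- reflect sum
  have hrefl2 : ∑ j ∈ Finset.range n, T * ((b + 1) * ((b - 1) * b ^ (n - 1 - j)))
      = T * ((b + 1) * (b - 1)) * gsum b n := by
    rw [Finset.sum_range_reflect (fun i => T * ((b + 1) * ((b - 1) * b ^ i))) n, gsum,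
      Finset.mul_sum]
    exact Finset.sum_congr rfl fun j _ => by ring
  -- main sum identity
  have hmain : 2 * (∑ t ∈ Finset.range T, Lf b t) + (n + 1) * T
      = T * ((b + 1) * (b - 1)) * gsum b n
        + (b ^ (n + 1) * ((b - 1) * (b - 1)) + 2 * ((b - 1) * b ^ n * (b - 1)) + (b - 1) * b ^ n) := by
    have h1 : 2 * (∑ t ∈ Finset.range T, Lf b t)
        = ∑ j ∈ Finset.range (n + 1), 2 * (∑ t ∈ Finset.range T, t / b ^ (j + 1)) := by
      rw [hswap, Finset.mul_sum]
    rw [h1, Finset.sum_range_succ]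
    have h2 : ∑ j ∈ Finset.range n, 2 * (∑ t ∈ Finset.range T, t / b ^ (j + 1)) + n * T
        = ∑ j ∈ Finset.range n, (2 * (∑ t ∈ Finset.range T, t / b ^ (j + 1)) + T) := by
      rw [Finset.sum_add_distrib, Finset.sum_const, Finset.card_range, smul_eq_mul,
        Nat.mul_comm]
    have h3 := Finset.sum_congr rfl hperj
    have hnt : (n + 1) * T = n * T + T := Nat.succ_mul n T
    calc ∑ j ∈ Finset.range n, 2 * (∑ t ∈ Finset.range T, t / b ^ (j + 1))
          + 2 * (∑ t ∈ Finset.range T, t / b ^ (n + 1)) + (n + 1) * T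
        = (∑ j ∈ Finset.range n, 2 * (∑ t ∈ Finset.range T, t / b ^ (j + 1)) + n * T)
          + (2 * (∑ t ∈ Finset.range T, t / b ^ (n + 1)) + T) := by omega
      _ = (∑ j ∈ Finset.range n, (2 * (∑ t ∈ Finset.range T, t / b ^ (j + 1)) + T))
          + (2 * (∑ t ∈ Finset.range T, t / b ^ (n + 1)) + T) := by rw [h2]
      _ = (∑ j ∈ Finset.range n, T * ((b + 1) * ((b - 1) * b ^ (n - 1 - j))))
          + (2 * (∑ t ∈ Finset.range T, t / b ^ (n + 1)) + T) := by rw [h3]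
      _ = T * ((b + 1) * (b - 1)) * gsum b n
          + (2 * (∑ t ∈ Finset.range T, t / b ^ (n + 1)) + T) := by rw [hrefl2]
      _ = _ := by rw [hlastj]
  -- move to ℤ
  have hLle : ∀ t ∈ Finset.range T, Lf b t ≤ N := fun t ht =>
    le_trans (Lf_mono b hb (le_of_lt (Finset.mem_range.1 ht))) (le_of_eq hLT)
  have hc1Z : (F1.card : ℤ)
      = (T : ℤ) * (N : ℤ) - ∑ t ∈ Finset.range T, (Lf b t : ℤ) := by
    rw [hc1, Nat.cast_sum]
    rw [Finset.sum_congr rfl (fun t ht => by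
      have := hLle t ht
      omega : ∀ t ∈ Finset.range T, ((N - Lf b t : ℕ) : ℤ) = (N : ℤ) - (Lf b t : ℤ))]
    rw [Finset.sum_sub_distrib, Finset.sum_const, Finset.card_range, nsmul_eq_mul]
  -- cast facts
  have hb1Z : ((b - 1 : ℕ) : ℤ) = (b : ℤ) - 1 := by omega
  have hb2Z : ((b - 1 - 1 : ℕ) : ℤ) = (b : ℤ) - 2 := by omega
  have hTZ : (T : ℤ) = ((b : ℤ) + 1) * (((b : ℤ) - 1) * (b : ℤ) ^ n) := by
    rw [hT_def]; push_cast [hb1Z]; ring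
  have hNZ : (N : ℤ) = ((b : ℤ) + 1) * (b : ℤ) ^ n - 2 := by
    have : (N : ℤ) = (((b + 1) * b ^ n : ℕ) : ℤ) - 2 := by rw [hN_def]; omega
    rw [this]; push_cast; ring
  have hqZ : ((b : ℤ) - 1) * (q : ℤ) = ((b : ℤ) + 1) * (b : ℤ) ^ n - 2 := by
    have : ((N : ℕ) : ℤ) = (((b - 1) * q : ℕ) : ℤ) := Nat.cast_inj.mpr hq
    rw [hNZ] at this
    push_cast [hb1Z] at this
    linarith [this]
  have hgZ : ((b : ℤ) - 1) * (gsum b n : ℤ) = (b : ℤ) ^ n - 1 := by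
    have := gsum_mul b n hb
    have h2 : (((b - 1) * gsum b n + 1 : ℕ) : ℤ) = ((b ^ n : ℕ) : ℤ) :=
      Nat.cast_inj.mpr this
    push_cast [hb1Z] at h2
    linarith [h2]
  have hmainZ : 2 * (∑ t ∈ Finset.range T, (Lf b t : ℤ)) + ((n : ℤ) + 1) * (T : ℤ)
      = (T : ℤ) * (((b : ℤ) + 1) * ((b : ℤ) - 1)) * (gsum b n : ℤ)
        + ((b : ℤ) ^ (n + 1) * (((b : ℤ) - 1) * ((b : ℤ) - 1))
          + 2 * (((b : ℤ) - 1) * (b : ℤ) ^ n * ((b : ℤ) - 1)) + ((b : ℤ) - 1) * (b : ℤ) ^ n) := by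
    have h2 : ((2 * (∑ t ∈ Finset.range T, Lf b t) + (n + 1) * T : ℕ) : ℤ)
        = ((T * ((b + 1) * (b - 1)) * gsum b n
        + (b ^ (n + 1) * ((b - 1) * (b - 1)) + 2 * ((b - 1) * b ^ n * (b - 1)) + (b - 1) * b ^ n) : ℕ) : ℤ) :=
      Nat.cast_inj.mpr hmain
    push_cast [hb1Z] at h2
    linarith [h2]
  have hgaussZ : 2 * (F2.card : ℤ) = (q : ℤ) * (((b : ℤ) - 1) * ((b : ℤ) - 2)) := by
    have h2 : ((2 * F2.card : ℕ) : ℤ) = ((q * ((b - 1) * (b - 1 - 1)) : ℕ) : ℤ) :=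
      Nat.cast_inj.mpr hgauss
    push_cast [hb1Z, hb2Z] at h2
    linarith [h2]
  -- final computation
  rw [hset, Set.ncard_coe_finset, Finset.card_union_of_disjoint hdisj]
  rw [mul_comm 2 n, pow_mul]
  push_cast
  linear_combination 2 * hc1Z - hmainZ + hgaussZ + ((b : ℤ) - 2) * hqZ
    - ((T : ℤ) * ((b : ℤ) + 1)) * hgZ + 2 * (T : ℤ) * hNZ
    + (2 * (((b : ℤ) + 1) * (b : ℤ) ^ n - 2) + ((n : ℤ) + 1)
      - ((b : ℤ) + 1) * ((b : ℤ) ^ n - 1)) * hTZ
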